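/- Let σ ∈ Σ with |δ_ν(σ)| ≤ K and let 𝒟 be a partition refining {σ}. Let 𝒟* = {τ ∈ 𝒟 : |δ_ν(τ) − δ_ν(σ)| ≥ 1/E and |δ_ν(τ)| ≤ K}. Then for the truncated energy θ, θ(𝒟) ≥ θ({σ}) + μ(𝒟*)/E², i.e. θ(𝒟) ≥ μ(σ)δ_ν(σ)² + μ(𝒟*)/E². -/

import Mathlib

open scoped Classical

/-- An additive function on a Boolean algebra. -/
def IsAdditive {α : Type*} [BooleanAlgebra α] (ν : α → ℝ) : Prop :=
  ν ⊥ = 0 ∧ ∀ σ τ : α, ν (σ ⊔ τ) = ν σ + ν τ - ν (σ ⊓ τ)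

/-- A partition: a finite set of pairwise disjoint elements. -/
def IsPartition {α : Type*} [BooleanAlgebra α] (A : Finset α) : Prop :=
  ∀ σ ∈ A, ∀ τ ∈ A, σ ≠ τ → σ ⊓ τ = ⊥

/-- `Refines A B` means `B` refines `A`. -/
def Refines {α : Type*} [BooleanAlgebra α] (A B : Finset α) : Prop :=
  B.sup id = A.sup id ∧ ∀ σ ∈ B, ∃ τ ∈ A, σ ≤ τ

/-- The K-truncated energy θ(𝒞) of an additive ν with respect to μ. -/
noncomputable def truncEnergy {α : Type*} [BooleanAlgebra α]
    (μ ν : α → ℝ) (K : ℝ) (C : Finset α) : ℝ :=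
  ∑ σ ∈ C.filter (fun σ => |ν σ / μ σ| ≤ K), μ σ * (ν σ / μ σ) ^ 2
    + 2 * K * ∑ σ ∈ C.filter (fun σ => K < |ν σ / μ σ|), μ σ * |ν σ / μ σ|


lemma additive_sup_sum {α : Type*} [BooleanAlgebra α] (f : α → ℝ) (hf : IsAdditive f)
    (D : Finset α) (hD : IsPartition D) : f (D.sup id) = ∑ τ ∈ D, f τ := by
  induction D using Finset.induction_on with
  | empty => simpa using hf.1
  | @insert a s ha ih =>
      have hDs : IsPartition s := fun x hx y hy hxy =>
        hD x (Finset.mem_insert_of_mem hx) y (Finset.mem_insert_of_mem hy) hxy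
      have hdisj : Disjoint a (s.sup id) := by
        rw [Finset.disjoint_sup_right]
        intro i hi
        have hne : a ≠ i := by rintro rfl; exact ha hi
        exact disjoint_iff.mpr (hD a (Finset.mem_insert_self a s) i
          (Finset.mem_insert_of_mem hi) hne)
      rw [Finset.sup_insert, Finset.sum_insert ha, id_eq, hf.2, disjoint_iff.mp hdisj,
        hf.1, ih hDs]
      ring

/-- energy increment on one cell: refining a single set of
    bounded density increases the truncated energy by at least μ(𝒟*)/E². -/
theorem truncEnergy_increment_single {α : Type*} [BooleanAlgebra α]
    (μ ν : α → ℝ) (hμadd : IsAdditive μ) (hνadd : IsAdditive ν)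
    (hμ01 : ∀ τ, 0 ≤ μ τ ∧ μ τ ≤ 1) (hμtop : μ ⊤ = 1)
    (K E : ℝ) (hK : 0 < K) (hE : 0 < E)
    (σ : α) (hμσ : 0 < μ σ) (hδσ : |ν σ / μ σ| ≤ K)
    (D : Finset α) (hD : IsPartition D) (href : Refines {σ} D)
    (hμposD : ∀ τ ∈ D, 0 < μ τ) :
    μ σ * (ν σ / μ σ) ^ 2
      + (∑ τ ∈ D.filter (fun τ =>
          1 / E ≤ |ν τ / μ τ - ν σ / μ σ| ∧ |ν τ / μ τ| ≤ K), μ τ) / E ^ 2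
      ≤ truncEnergy μ ν K D := by
  classical
  obtain ⟨hμ0, hμ2⟩ := hμadd
  set d : ℝ := ν σ / μ σ with hd
  have hsupD : D.sup id = σ := by
    have := href.1
    simpa using this
  have hμsum : μ σ = ∑ τ ∈ D, μ τ := by
    rw [← hsupD]; exact additive_sup_sum μ ⟨hμ0, hμ2⟩ D hD
  have hνsum : ν σ = ∑ τ ∈ D, ν τ := by
    rw [← hsupD]; exact additive_sup_sum ν hνadd D hD
  have hμσne : μ σ ≠ 0 := ne_of_gt hμσ
  have hνσ : ν σ = μ σ * d := by rw [hd, mul_div_assoc', eq_div_iff hμσne, mul_comm]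
  -- pointwise inequality
  have key : ∀ τ ∈ D,
      μ τ * (2 * d * (ν τ / μ τ) - d ^ 2)
        + (if (1 / E ≤ |ν τ / μ τ - d| ∧ |ν τ / μ τ| ≤ K) then μ τ / E ^ 2 else 0)
      ≤ (if |ν τ / μ τ| ≤ K then μ τ * (ν τ / μ τ) ^ 2
          else 2 * K * (μ τ * |ν τ / μ τ|)) := by
    intro τ hτ
    have hμτ : 0 < μ τ := hμposD τ hτ
    set x : ℝ := ν τ / μ τ with hx
    by_cases hxK : |x| ≤ K
    · rw [if_pos hxK]
      by_cases hcond : 1 / E ≤ |x - d| ∧ |x| ≤ K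
      · rw [if_pos hcond]
        have h1 : (1 / E) ^ 2 ≤ (x - d) ^ 2 := by
          have := hcond.1
          have h0 : (0:ℝ) ≤ 1 / E := by positivity
          calc (1 / E) ^ 2 ≤ |x - d| ^ 2 := by
                exact pow_le_pow_left₀ h0 this 2
            _ = (x - d) ^ 2 := sq_abs _
        have h1' : 1 / E ^ 2 ≤ (x - d) ^ 2 := by
          rw [div_pow, one_pow] at h1; exact h1
        have h2 := mul_le_mul_of_nonneg_left h1' (le_of_lt hμτ)
        rw [mul_one_div] at h2
        nlinarith [h2]
      · rw [if_neg hcond]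
        nlinarith [sq_nonneg (x - d), hμτ.le]
    · rw [if_neg hxK]
      have hcond : ¬ (1 / E ≤ |x - d| ∧ |x| ≤ K) := fun h => hxK h.2
      rw [if_neg hcond]
      have habs : d * x ≤ |d| * |x| := by
        calc d * x ≤ |d * x| := le_abs_self _
          _ = |d| * |x| := abs_mul d x
      have hdK : |d| ≤ K := hδσ
      have hxabs : (0:ℝ) ≤ |x| := abs_nonneg x
      have h2 : |d| * |x| ≤ K * |x| := mul_le_mul_of_nonneg_right hdK hxabs
      nlinarith [sq_nonneg d, hμτ.le, mul_le_mul_of_nonneg_left (habs.trans h2) hμτ.le]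
  have hsumle := Finset.sum_le_sum key
  -- rewrite RHS sum as truncEnergy
  have hRHS : ∑ τ ∈ D, (if |ν τ / μ τ| ≤ K then μ τ * (ν τ / μ τ) ^ 2
      else 2 * K * (μ τ * |ν τ / μ τ|)) = truncEnergy μ ν K D := by
    rw [Finset.sum_ite, truncEnergy, Finset.mul_sum]
    congr 1
    apply Finset.sum_congr _ (fun _ _ => rfl)
    apply Finset.filter_congr
    intro τ _
    simp [not_le]
  -- rewrite LHS sum
  have hLHS : ∑ τ ∈ D, (μ τ * (2 * d * (ν τ / μ τ) - d ^ 2)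
        + (if (1 / E ≤ |ν τ / μ τ - d| ∧ |ν τ / μ τ| ≤ K) then μ τ / E ^ 2 else 0))
      = μ σ * d ^ 2
        + (∑ τ ∈ D.filter (fun τ =>
            1 / E ≤ |ν τ / μ τ - d| ∧ |ν τ / μ τ| ≤ K), μ τ) / E ^ 2 := by
    rw [Finset.sum_add_distrib]
    congr 1
    · have hterm : ∀ τ ∈ D, μ τ * (2 * d * (ν τ / μ τ) - d ^ 2)
          = 2 * d * ν τ - d ^ 2 * μ τ := by
        intro τ hτ
        have hμτ : μ τ ≠ 0 := ne_of_gt (hμposD τ hτ)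
        field_simp
      rw [Finset.sum_congr rfl hterm, Finset.sum_sub_distrib, ← Finset.mul_sum,
        ← Finset.mul_sum, ← hνsum, ← hμsum, hνσ]
      ring
    · rw [← Finset.sum_filter, Finset.sum_div]
  rw [hRHS, hLHS] at hsumle
  exact hsumle
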